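/- Fix integers n, k ≥ 1 and let N(n) be the minimal integer N ≥ 1 such that there exists an n-dimensional linear subspace E ⊆ M_N(R) in which every matrix is a real scalar multiple of an orthogonal matrix (such N exists). Then there exists a tensor z ∈ (R^n)^{⊗k}, the k-fold tensor power of Euclidean space R^n with its induced inner product, such that: (1) ⟨x_1 ⊗ ⋯ ⊗ x_k, z⟩ ≤ ‖x_1‖₂ ⋯ ‖x_k‖₂ for all x_1, …, x_k ∈ R^n; and (2) ‖z‖₂² ≥ n^k / N(n). -/

import Mathlib

open scoped RealInnerProductSpace

noncomputable section

/-- The property that `M_N(ℝ)` contains an `n`-dimensional subspace in which every matrix is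
a real multiple of an orthogonal matrix. -/
def HasOrthSubspace (n N : ℕ) : Prop :=
  ∃ E : Submodule ℝ (Matrix (Fin N) (Fin N) ℝ), Module.finrank ℝ E = n ∧
    ∀ A ∈ E, ∃ (c : ℝ) (U : Matrix (Fin N) (Fin N) ℝ),
      U ∈ Matrix.orthogonalGroup (Fin N) ℝ ∧ A = c • U

/-- The element of the `k`-fold tensor power of `ℝⁿ` (realized as the Euclidean space with
orthonormal basis indexed by `Fin k → Fin n`) corresponding to `x₁ ⊗ ⋯ ⊗ x_k`. -/
def elementaryTensor (n k : ℕ) (x : Fin k → EuclideanSpace ℝ (Fin n)) :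
    EuclideanSpace ℝ (Fin k → Fin n) :=
  (WithLp.equiv 2 ((Fin k → Fin n) → ℝ)).symm (fun i => ∏ j, x j (i j))

namespace MagicalTensorAux

open Matrix

/-- The linear equivalence between matrices and Euclidean space of pairs. -/
def matEquiv (N : ℕ) : Matrix (Fin N) (Fin N) ℝ ≃ₗ[ℝ] EuclideanSpace ℝ (Fin N × Fin N) where
  toFun A := (WithLp.equiv 2 ((Fin N × Fin N) → ℝ)).symm (fun p => A p.1 p.2)
  invFun v := Matrix.of (fun a b => v (a, b))
  map_add' _ _ := rfl
  map_smul' _ _ := rfl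
  left_inv _ := rfl
  right_inv _ := rfl

lemma matEquiv_apply {N : ℕ} (A : Matrix (Fin N) (Fin N) ℝ) (p : Fin N × Fin N) :
    matEquiv N A p = A p.1 p.2 := rfl

lemma frob {N : ℕ} (A : Matrix (Fin N) (Fin N) ℝ) :
    ⟪matEquiv N A, matEquiv N A⟫ = Matrix.trace (Aᵀ * A) := by
  simp only [PiLp.inner_apply, RCLike.inner_apply, conj_trivial, matEquiv_apply]
  rw [Fintype.sum_prod_type]
  simp only [Matrix.trace, Matrix.diag, Matrix.mul_apply, Matrix.transpose_apply]
  rw [Finset.sum_comm]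

/-- Products of "conformal" matrices are conformal. -/
lemma conf_prod {N : ℕ} (L : List (Matrix (Fin N) (Fin N) ℝ × ℝ))
    (h : ∀ p ∈ L, p.1ᵀ * p.1 = p.2 • (1 : Matrix (Fin N) (Fin N) ℝ)) :
    ((L.map Prod.fst).prod)ᵀ * (L.map Prod.fst).prod
      = (L.map Prod.snd).prod • (1 : Matrix (Fin N) (Fin N) ℝ) := by
  induction L with
  | nil => simp
  | cons p L ih =>
    have hp : p.1ᵀ * p.1 = p.2 • 1 := h p List.mem_cons_self
    have hL := ih (fun q hq => h q (List.mem_cons_of_mem _ hq))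
    simp only [List.map_cons, List.prod_cons, Matrix.transpose_mul]
    rw [mul_assoc, ← mul_assoc p.1ᵀ, hp, smul_mul_assoc, one_mul, mul_smul_comm, hL,
      smul_smul]

/-- Multilinear expansion of a product of sums of matrices. -/
lemma expand_prod {N n : ℕ} (B : Fin n → Matrix (Fin N) (Fin N) ℝ) :
    ∀ (k : ℕ) (x : Fin k → Fin n → ℝ),
      ∑ i : Fin k → Fin n, (∏ j, x j (i j)) • (List.ofFn fun j => B (i j)).prod
        = (List.ofFn fun j => ∑ s, x j s • B s).prod := by
  intro k
  induction k with
  | zero =>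
    intro x
    simp
  | succ k ih =>
    intro x
    rw [← Equiv.sum_comp (Fin.consEquiv (fun _ : Fin (k+1) => Fin n))
      (fun i => (∏ j, x j (i j)) • (List.ofFn fun j => B (i j)).prod),
      Fintype.sum_prod_type]
    have hterm : ∀ (a : Fin n) (f : Fin k → Fin n),
        (∏ j, x j ((Fin.consEquiv (fun _ : Fin (k+1) => Fin n)) (a, f) j)) •
          (List.ofFn fun j => B ((Fin.consEquiv (fun _ : Fin (k+1) => Fin n)) (a, f) j)).prod
        = (x 0 a • B a) *
          ((∏ j, x j.succ (f j)) • (List.ofFn fun j => B (f j)).prod) := by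
      intro a f
      simp only [Fin.consEquiv_apply]
      rw [Fin.prod_univ_succ, List.ofFn_succ]
      simp only [Fin.cons_zero, Fin.cons_succ, List.prod_cons]
      rw [smul_mul_smul_comm]
    simp only [hterm]
    rw [← Finset.sum_mul_sum]
    rw [ih (fun j => x j.succ)]
    rw [List.ofFn_succ, List.prod_cons]

/-- Quadratic form computation. -/
lemma quad {N : ℕ} (M : Matrix (Fin N) (Fin N) ℝ) (c : ℝ)
    (h : Mᵀ * M = c • 1) (v : Fin N → ℝ) :
    ∑ s, ((M *ᵥ v) s)^2 = c * ∑ s, (v s)^2 := by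
  have h1 : ∑ s, ((M *ᵥ v) s)^2 = (M *ᵥ v) ⬝ᵥ (M *ᵥ v) := by
    simp [dotProduct, pow_two]
  have h2 : v ⬝ᵥ ((Mᵀ * M) *ᵥ v) = (M *ᵥ v) ⬝ᵥ (M *ᵥ v) := by
    rw [← Matrix.mulVec_mulVec, Matrix.dotProduct_mulVec, Matrix.vecMul_transpose]
  rw [h1, ← h2, h, Matrix.smul_mulVec, Matrix.one_mulVec, dotProduct_smul,
    smul_eq_mul]
  congr 1
  simp [dotProduct, pow_two]

lemma sum_smul_mulVec_apply {N : ℕ} {ι : Type*} [Fintype ι] (c : ι → ℝ)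
    (M : ι → Matrix (Fin N) (Fin N) ℝ) (v : Fin N → ℝ) (s : Fin N) :
    ∑ i, c i * ((M i *ᵥ v) s) = ((∑ i, c i • M i) *ᵥ v) s := by
  simp only [Matrix.mulVec, dotProduct, Matrix.sum_apply, Matrix.smul_apply,
    smul_eq_mul, Finset.sum_mul, Finset.mul_sum, mul_assoc]
  rw [Finset.sum_comm]

/-- A basis normalized so that every linear combination is conformal. -/
lemma exists_good_basis (n N : ℕ) (hN₁ : 1 ≤ N) (hN : HasOrthSubspace n N) :
    ∃ B : Fin n → Matrix (Fin N) (Fin N) ℝ, ∀ v : Fin n → ℝ,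
      (∑ s, v s • B s)ᵀ * (∑ s, v s • B s)
        = ((∑ s, (v s)^2) / N) • (1 : Matrix (Fin N) (Fin N) ℝ) := by
  classical
  obtain ⟨E, hrank, horth⟩ := hN
  have hNR : ((N:ℝ)) ≠ 0 := Nat.cast_ne_zero.mpr (by omega)
  have key : ∀ A ∈ E, Aᵀ * A = ((Matrix.trace (Aᵀ * A)) / N) • 1 := by
    intro A hA
    obtain ⟨c, U, hU, rfl⟩ := horth A hA
    have hUU : Uᵀ * U = 1 := by
      have h1 := (Matrix.mem_unitaryGroup_iff'.mp hU)
      rwa [Matrix.star_eq_conjTranspose, Matrix.conjTranspose_eq_transpose_of_trivial] at h1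
    have h2 : (c • U)ᵀ * (c • U) = (c^2) • (1 : Matrix (Fin N) (Fin N) ℝ) := by
      rw [Matrix.transpose_smul, Matrix.smul_mul, Matrix.mul_smul, hUU, smul_smul, pow_two]
    rw [h2]
    congr 1
    rw [Matrix.trace_smul, Matrix.trace_one]
    simp only [smul_eq_mul, Fintype.card_fin]
    field_simp
  set eV : Matrix (Fin N) (Fin N) ℝ ≃ₗ[ℝ] EuclideanSpace ℝ (Fin N × Fin N) := matEquiv N
    with heV
  set E' : Submodule ℝ (EuclideanSpace ℝ (Fin N × Fin N)) := E.map (eV.toLinearMap) with hE'def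
  have hE' : Module.finrank ℝ E' = n := by
    rw [hE'def, LinearEquiv.finrank_map_eq]; exact hrank
  let b : OrthonormalBasis (Fin n) ℝ E' :=
    (stdOrthonormalBasis ℝ E').reindex (finCongr (by rw [hE']))
  set B : Fin n → Matrix (Fin N) (Fin N) ℝ :=
    fun i => eV.symm ((b i : EuclideanSpace ℝ (Fin N × Fin N))) with hBdef
  have hBmem : ∀ i, B i ∈ E := by
    intro i
    have hmem : ((b i : EuclideanSpace ℝ (Fin N × Fin N))) ∈ E' := (b i).2
    obtain ⟨A, hA, hAeq⟩ := Submodule.mem_map.mp hmem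
    have hg : B i = A := by
      have h2 : eV.symm (eV A) = eV.symm ((b i : EuclideanSpace ℝ (Fin N × Fin N))) := by
        rw [← hAeq]; rfl
      rw [eV.symm_apply_apply] at h2
      rw [hBdef]
      exact h2.symm
    rw [hg]; exact hA
  have hon : ∀ i j, ⟪(b i : EuclideanSpace ℝ (Fin N × Fin N)),
      (b j : EuclideanSpace ℝ (Fin N × Fin N))⟫ = if i = j then (1:ℝ) else 0 := by
    intro i j
    rw [← Submodule.coe_inner]
    exact orthonormal_iff_ite.mp b.orthonormal i j
  refine ⟨B, fun v => ?_⟩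
  have hAE : (∑ s, v s • B s) ∈ E :=
    Submodule.sum_mem _ (fun s _ => Submodule.smul_mem _ _ (hBmem s))
  have heVA : eV (∑ s, v s • B s)
      = ∑ s, v s • ((b s : EuclideanSpace ℝ (Fin N × Fin N))) := by
    rw [map_sum]
    refine Finset.sum_congr rfl fun s _ => ?_
    simp only [hBdef, _root_.map_smul]
    rw [eV.apply_symm_apply]
  have htr : Matrix.trace ((∑ s, v s • B s)ᵀ * (∑ s, v s • B s)) = ∑ s, (v s)^2 := by
    rw [← frob, heVA]
    calc ⟪∑ s, v s • ((b s : EuclideanSpace ℝ (Fin N × Fin N))),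
          ∑ t, v t • ((b t : EuclideanSpace ℝ (Fin N × Fin N)))⟫
        = ∑ s, v s * ⟪(b s : EuclideanSpace ℝ (Fin N × Fin N)),
            ∑ t, v t • ((b t : EuclideanSpace ℝ (Fin N × Fin N)))⟫ := by
          rw [sum_inner]
          exact Finset.sum_congr rfl fun s _ => real_inner_smul_left _ _ _
      _ = ∑ s, v s * ∑ t, v t * ⟪(b s : EuclideanSpace ℝ (Fin N × Fin N)),
            (b t : EuclideanSpace ℝ (Fin N × Fin N))⟫ := by
          refine Finset.sum_congr rfl fun s _ => ?_
          congr 1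
          rw [inner_sum]
          exact Finset.sum_congr rfl fun t _ => real_inner_smul_right _ _ _
      _ = ∑ s, (v s)^2 := by
          refine Finset.sum_congr rfl fun s _ => ?_
          simp only [hon, mul_ite, mul_one, mul_zero]
          rw [Finset.sum_ite_eq Finset.univ s v]
          simp [pow_two]
  rw [key _ hAE, htr]

end MagicalTensorAux

open MagicalTensorAux Matrix in
/-- **Lemma.** If `N = N(n)` is the minimal size of a matrix algebra containing an
`n`-dimensional subspace of multiples of orthogonal matrices, then there is a tensor
`z ∈ (ℝⁿ)^{⊗k}` with `⟨x₁ ⊗ ⋯ ⊗ x_k, z⟩ ≤ ‖x₁‖⋯‖x_k‖` for all `xᵢ`, and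
`‖z‖² ≥ nᵏ / N(n)`. -/
theorem exists_magical_tensor (n k : ℕ) (hn : 1 ≤ n) (hk : 1 ≤ k)
    (N : ℕ) (hN₁ : 1 ≤ N) (hN : HasOrthSubspace n N)
    (hNmin : ∀ N' : ℕ, 1 ≤ N' → HasOrthSubspace n N' → N ≤ N') :
    ∃ z : EuclideanSpace ℝ (Fin k → Fin n),
      (∀ x : Fin k → EuclideanSpace ℝ (Fin n),
        ⟪elementaryTensor n k x, z⟫ ≤ ∏ j, ‖x j‖) ∧
      (n : ℝ) ^ k / N ≤ ‖z‖ ^ 2 := by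
  classical
  have hNR : ((N:ℝ)) ≠ 0 := Nat.cast_ne_zero.mpr (by omega)
  have hNpos : (0:ℝ) < N := by
    have : (0:ℕ) < N := by omega
    exact_mod_cast this
  obtain ⟨B, hB⟩ := exists_good_basis n N hN₁ hN
  -- a single basis matrix is conformal
  have hB1 : ∀ s, (B s)ᵀ * B s = ((1:ℝ)/N) • 1 := by
    intro s
    have h := hB (fun t => if t = s then 1 else 0)
    have h1 : (∑ t, (if t = s then (1:ℝ) else 0) • B t) = B s := by
      simp [ite_smul, Finset.sum_ite_eq']
    have h2 : (∑ t, (if t = s then (1:ℝ) else 0)^2) = 1 := by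
      have he : ∀ t : Fin n, ((if t = s then (1:ℝ) else 0))^2
          = if t = s then (1:ℝ) else 0 := by
        intro t; split <;> norm_num
      simp [he, Finset.sum_ite_eq']
    rw [h1, h2] at h
    exact h
  set t₀ : Fin N := ⟨0, hN₁⟩ with ht₀
  set ξ : Fin N → ℝ := fun t => if t = t₀ then 1 else 0 with hξ
  have hξsum : ∑ t, (ξ t)^2 = 1 := by
    have he : ∀ t : Fin N, (ξ t)^2 = if t = t₀ then (1:ℝ) else 0 := by
      intro t; rw [hξ]; by_cases h : t = t₀ <;> simp [h]
    simp [he, Finset.sum_ite_eq']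
  set Mw : (Fin k → Fin n) → Matrix (Fin N) (Fin N) ℝ :=
    fun i => (List.ofFn fun j => B (i j)).prod with hMw
  have hMwc : ∀ i, (Mw i)ᵀ * Mw i = (((1:ℝ)/N)^k) • 1 := by
    intro i
    have h := conf_prod (List.ofFn fun j => (B (i j), (1:ℝ)/N)) ?_
    · have hfst : (List.ofFn fun j => (B (i j), (1:ℝ)/N)).map Prod.fst
          = List.ofFn fun j => B (i j) := by
        rw [List.map_ofFn]; rfl
      have hsnd : ((List.ofFn fun j : Fin k => (B (i j), (1:ℝ)/N)).map Prod.snd).prod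
          = ((1:ℝ)/N)^k := by
        rw [List.map_ofFn, List.prod_ofFn]
        simp
      rw [hfst, hsnd] at h
      exact h
    · intro p hp
      rw [List.mem_ofFn] at hp
      obtain ⟨j, hj⟩ := hp
      rw [← hj]
      exact hB1 (i j)
  set w : (Fin k → Fin n) → Fin N → ℝ :=
    fun i s => (Real.sqrt N)^k * (Mw i *ᵥ ξ) s with hw
  have hsqrtN : ((Real.sqrt N)^k)^2 = (N:ℝ)^k := by
    rw [← pow_mul, mul_comm, pow_mul, Real.sq_sqrt (Nat.cast_nonneg N)]
  have hw_i : ∀ i, ∑ s, (w i s)^2 = 1 := by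
    intro i
    have hq := quad (Mw i) _ (hMwc i) ξ
    calc ∑ s, (w i s)^2 = ((Real.sqrt N)^k)^2 * ∑ s, ((Mw i *ᵥ ξ) s)^2 := by
          rw [Finset.mul_sum]
          exact Finset.sum_congr rfl fun s _ => by rw [hw]; ring
      _ = (N:ℝ)^k * (((1:ℝ)/N)^k * 1) := by rw [hq, hξsum, hsqrtN]
      _ = 1 := by
          rw [mul_one, one_div, inv_pow, mul_inv_cancel₀ (pow_ne_zero _ hNR)]
  have htotal : ∑ s, ∑ i : Fin k → Fin n, (w i s)^2 = (n:ℝ)^k := by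
    rw [Finset.sum_comm]
    calc ∑ i : Fin k → Fin n, ∑ s, (w i s)^2 = ∑ i : Fin k → Fin n, (1:ℝ) :=
          Finset.sum_congr rfl fun i _ => hw_i i
      _ = (Fintype.card (Fin k → Fin n) : ℝ) := by
          rw [Finset.sum_const, Finset.card_univ, nsmul_eq_mul, mul_one]
      _ = (n:ℝ)^k := by
          rw [Fintype.card_fun, Fintype.card_fin, Fintype.card_fin]
          push_cast
          ring
  have hex : ∃ s₀ : Fin N, (n:ℝ)^k / N ≤ ∑ i : Fin k → Fin n, (w i s₀)^2 := by
    have hne : (Finset.univ : Finset (Fin N)).Nonempty := ⟨t₀, Finset.mem_univ _⟩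
    have hsum : ∑ _s : Fin N, ((n:ℝ)^k / N) ≤ ∑ s, ∑ i : Fin k → Fin n, (w i s)^2 := by
      rw [htotal, Finset.sum_const, Finset.card_univ, Fintype.card_fin, nsmul_eq_mul]
      rw [mul_comm, div_mul_cancel₀ _ hNR]
    obtain ⟨s₀, _, h⟩ := Finset.exists_le_of_sum_le hne hsum
    exact ⟨s₀, h⟩
  obtain ⟨s₀, hs₀⟩ := hex
  refine ⟨(WithLp.equiv 2 ((Fin k → Fin n) → ℝ)).symm (fun i => w i s₀), ?_, ?_⟩
  · -- the inner product bound
    intro x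
    have hnormE : ∀ y : EuclideanSpace ℝ (Fin n), ∑ s, (y s)^2 = ‖y‖^2 := by
      intro y
      rw [EuclideanSpace.norm_eq, Real.sq_sqrt (by positivity)]
      exact Finset.sum_congr rfl fun s _ => by
        rw [Real.norm_eq_abs, sq_abs]
    have hinner : ⟪elementaryTensor n k x,
        (WithLp.equiv 2 ((Fin k → Fin n) → ℝ)).symm (fun i => w i s₀)⟫
        = ∑ i : Fin k → Fin n, (∏ j, x j (i j)) * w i s₀ := by
      rw [elementaryTensor, PiLp.inner_apply]
      exact Finset.sum_congr rfl fun i _ => by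
        rw [RCLike.inner_apply, conj_trivial, WithLp.equiv_symm_apply,
          WithLp.ofLp_toLp, WithLp.ofLp_toLp]
        exact mul_comm _ _
    rw [hinner]
    set P : Matrix (Fin N) (Fin N) ℝ :=
      (List.ofFn fun j => ∑ s, x j s • B s).prod with hP
    have hexp : ∑ i : Fin k → Fin n, (∏ j, x j (i j)) • Mw i = P :=
      expand_prod B k (fun j s => x j s)
    have hPc : Pᵀ * P = (∏ j, (‖x j‖^2 / N)) • 1 := by
      have h := conf_prod (List.ofFn fun j => (∑ s, x j s • B s, ‖x j‖^2/N)) ?_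
      · have hfst : (List.ofFn fun j => (∑ s, x j s • B s, ‖x j‖^2/N)).map Prod.fst
            = List.ofFn fun j => ∑ s, x j s • B s := by
          rw [List.map_ofFn]; rfl
        have hsnd : ((List.ofFn fun j : Fin k =>
            (∑ s, x j s • B s, ‖x j‖^2/N)).map Prod.snd).prod = ∏ j, (‖x j‖^2/N) := by
          rw [List.map_ofFn, List.prod_ofFn]; rfl
        rw [hfst, hsnd] at h
        exact h
      · intro p hp
        rw [List.mem_ofFn] at hp
        obtain ⟨j, hj⟩ := hp
        rw [← hj]
        rw [hB (fun s => x j s), hnormE (x j)]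
    have hquad : ∑ s, ((P *ᵥ ξ) s)^2 = ∏ j, (‖x j‖^2 / N) := by
      rw [quad P _ hPc ξ, hξsum, mul_one]
    set D : ℝ := (∏ j, ‖x j‖) / (Real.sqrt N)^k with hD
    have hDnn : 0 ≤ D := by
      rw [hD]
      positivity
    have hD2 : D^2 = ∏ j, (‖x j‖^2 / N) := by
      rw [hD, div_pow, hsqrtN, ← Finset.prod_pow, Finset.prod_div_distrib,
        Finset.prod_const, Finset.card_univ, Fintype.card_fin]
    have hPb : (P *ᵥ ξ) s₀ ≤ D := by
      calc (P *ᵥ ξ) s₀ ≤ |(P *ᵥ ξ) s₀| := le_abs_self _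
        _ = Real.sqrt (((P *ᵥ ξ) s₀)^2) := (Real.sqrt_sq_eq_abs _).symm
        _ ≤ Real.sqrt (D^2) := by
            apply Real.sqrt_le_sqrt
            rw [hD2, ← hquad]
            exact Finset.single_le_sum (f := fun s => ((P *ᵥ ξ) s)^2)
              (fun s _ => sq_nonneg _) (Finset.mem_univ s₀)
        _ = D := Real.sqrt_sq hDnn
    have hchain : ∑ i : Fin k → Fin n, (∏ j, x j (i j)) * w i s₀
        = (Real.sqrt N)^k * ((P *ᵥ ξ) s₀) := by
      calc ∑ i : Fin k → Fin n, (∏ j, x j (i j)) * w i s₀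
          = (Real.sqrt N)^k * ∑ i : Fin k → Fin n, (∏ j, x j (i j)) * ((Mw i *ᵥ ξ) s₀) := by
            rw [Finset.mul_sum]
            exact Finset.sum_congr rfl fun i _ => by rw [hw]; ring
        _ = (Real.sqrt N)^k * ((P *ᵥ ξ) s₀) := by
            rw [sum_smul_mulVec_apply (fun i : Fin k → Fin n => ∏ j, x j (i j)) Mw ξ s₀, hexp]
    rw [hchain]
    have hmul := mul_le_mul_of_nonneg_left hPb
      (pow_nonneg (Real.sqrt_nonneg (N:ℝ)) k)
    refine le_trans hmul ?_
    rw [hD, mul_div_cancel₀]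
    apply pow_ne_zero
    exact ne_of_gt (Real.sqrt_pos.mpr hNpos)
  · -- the norm bound
    have hz : ‖(WithLp.equiv 2 ((Fin k → Fin n) → ℝ)).symm (fun i => w i s₀)‖^2
        = ∑ i : Fin k → Fin n, (w i s₀)^2 := by
      rw [EuclideanSpace.norm_eq, Real.sq_sqrt (by positivity)]
      exact Finset.sum_congr rfl fun i _ => by
        rw [WithLp.equiv_symm_apply, WithLp.ofLp_toLp, Real.norm_eq_abs, sq_abs]
    rw [hz]
    exact hs₀

end
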